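/- Let σ = (Z,P) and τ = (W,Q) be stability conditions on a triangulated category D, and define their slicing distance d(P,Q) = sup over all nonzero objects E of D of max( |φ⁺_σ(E) − φ⁺_τ(E)| , |φ⁻_σ(E) − φ⁻_τ(E)| ). Then |gldim σ − gldim τ| ≤ 2·d(P,Q) (as an inequality in the extended reals [0,∞]). In particular, the global dimension function gldim is continuous on the space of stability conditions equipped with Bridgeland's metric. -/

import Mathlib

open CategoryTheory CategoryTheory.Limits CategoryTheory.Pretriangulated

universe v u

variable (D : Type u) [Category.{v} D] [Preadditive D] [HasZeroObject D]
  [HasShift D ℤ] [∀ n : ℤ, (shiftFunctor D n).Additive] [Pretriangulated D]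

/-- A slicing on a triangulated category (Bridgeland). -/
structure Slicing where
  P : ℝ → Set D
  iso_closed : ∀ {φ : ℝ} {X Y : D}, X ∈ P φ → Nonempty (X ≅ Y) → Y ∈ P φ
  zero_mem : ∀ (φ : ℝ) (X : D), IsZero X → X ∈ P φ
  shift_iff : ∀ (φ : ℝ) (X : D), X ∈ P φ ↔ X⟦(1 : ℤ)⟧ ∈ P (φ + 1)
  hom_orthogonal : ∀ {φ₁ φ₂ : ℝ} {A B : D}, φ₂ < φ₁ → A ∈ P φ₁ → B ∈ P φ₂ →
    ∀ f : A ⟶ B, f = 0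
  HN : ∀ E : D, ¬ IsZero E →
    ∃ (l : ℕ) (obj : Fin (l + 1) → D) (φ : Fin l → ℝ),
      StrictAnti φ ∧ IsZero (obj 0) ∧ Nonempty (obj (Fin.last l) ≅ E) ∧
      ∀ i : Fin l, ∃ A : D, A ∈ P (φ i) ∧ ¬ IsZero A ∧
        ∃ (f : obj i.castSucc ⟶ obj i.succ) (g : obj i.succ ⟶ A)
          (h : A ⟶ (obj i.castSucc)⟦(1 : ℤ)⟧),
          Triangle.mk f g h ∈ distTriang D

/-- A Bridgeland stability condition: a central charge (additive on distinguished
triangles) together with a compatible slicing. -/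
structure StabilityCondition extends Slicing D where
  Z : D → ℂ
  additive : ∀ T : Triangle D, T ∈ (distTriang D) → Z T.obj₂ = Z T.obj₁ + Z T.obj₃
  positivity : ∀ {φ : ℝ} {E : D}, E ∈ P φ → ¬ IsZero E →
    ∃ m : ℝ, 0 < m ∧ Z E = (m : ℂ) * Complex.exp (Real.pi * φ * Complex.I)

/-- The global dimension of a stability condition. -/
noncomputable def gldim (σ : StabilityCondition D) : EReal :=
  sSup { x : EReal | ∃ (φ₁ φ₂ : ℝ) (A B : D), A ∈ σ.P φ₁ ∧ B ∈ σ.P φ₂ ∧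
    ¬ IsZero A ∧ ¬ IsZero B ∧ (∃ f : A ⟶ B, f ≠ 0) ∧ x = ((φ₂ - φ₁ : ℝ) : EReal) }

/-- `φp` and `φm` are top/bottom Harder–Narasimhan phase functions for the stability
condition `σ`: every nonzero object admits an HN filtration with nonzero semistable
factors of strictly decreasing phases, whose first phase is `φp E` and last is `φm E`. -/
def IsHNPhases (σ : StabilityCondition D) (φp φm : D → ℝ) : Prop :=
  ∀ E : D, ¬ IsZero E →
    ∃ (l : ℕ) (obj : Fin (l + 2) → D) (φ : Fin (l + 1) → ℝ),
      StrictAnti φ ∧ IsZero (obj 0) ∧ Nonempty (obj (Fin.last (l + 1)) ≅ E) ∧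
      φp E = φ 0 ∧ φm E = φ (Fin.last l) ∧
      ∀ i : Fin (l + 1), ∃ A : D, A ∈ σ.P (φ i) ∧ ¬ IsZero A ∧
        ∃ (f : obj i.castSucc ⟶ obj i.succ) (g : obj i.succ ⟶ A)
          (h : A ⟶ (obj i.castSucc)⟦(1 : ℤ)⟧),
          Triangle.mk f g h ∈ distTriang D

lemma chainVanishLeft {n : ℕ} (obj : Fin (n+1) → D) (F : Fin n → D)
    (f : ∀ i : Fin n, obj i.castSucc ⟶ obj i.succ) (g : ∀ i : Fin n, obj i.succ ⟶ F i)
    (h : ∀ i : Fin n, F i ⟶ (obj i.castSucc)⟦(1:ℤ)⟧)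
    (htri : ∀ i : Fin n, Triangle.mk (f i) (g i) (h i) ∈ distTriang D)
    (h0 : IsZero (obj 0)) (Y : D) (hF : ∀ i (v : F i ⟶ Y), v = 0) :
    ∀ (j : Fin (n+1)) (u : obj j ⟶ Y), u = 0 := by
  suffices H : ∀ (k : ℕ) (hk : k < n+1) (u : obj ⟨k, hk⟩ ⟶ Y), u = 0 by
    intro j u; exact H j.1 j.2 u
  intro k
  induction k with
  | zero =>
    intro hk u
    have hz : IsZero (obj ⟨0, hk⟩) := by
      rw [show (⟨0, hk⟩ : Fin (n+1)) = 0 from by ext; simp]; exact h0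
    exact hz.eq_of_src u 0
  | succ k ih =>
    intro hk u
    have hkn : k < n := by omega
    have h1 : f ⟨k, hkn⟩ ≫ u = 0 := ih (by omega) (f ⟨k, hkn⟩ ≫ u)
    obtain ⟨v, hv⟩ := Triangle.yoneda_exact₂ _ (htri ⟨k, hkn⟩) u h1
    rw [hv, hF _ v]; exact comp_zero

lemma chainVanishRight {n : ℕ} (obj : Fin (n+1) → D) (F : Fin n → D)
    (f : ∀ i : Fin n, obj i.castSucc ⟶ obj i.succ) (g : ∀ i : Fin n, obj i.succ ⟶ F i)
    (h : ∀ i : Fin n, F i ⟶ (obj i.castSucc)⟦(1:ℤ)⟧)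
    (htri : ∀ i : Fin n, Triangle.mk (f i) (g i) (h i) ∈ distTriang D)
    (h0 : IsZero (obj 0)) (X : D) (hF : ∀ i (v : X ⟶ F i), v = 0) :
    ∀ (j : Fin (n+1)) (u : X ⟶ obj j), u = 0 := by
  suffices H : ∀ (k : ℕ) (hk : k < n+1) (u : X ⟶ obj ⟨k, hk⟩), u = 0 by
    intro j u; exact H j.1 j.2 u
  intro k
  induction k with
  | zero =>
    intro hk u
    have hz : IsZero (obj ⟨0, hk⟩) := by
      rw [show (⟨0, hk⟩ : Fin (n+1)) = 0 from by ext; simp]; exact h0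
    exact hz.eq_of_tgt u 0
  | succ k ih =>
    intro hk u
    have hkn : k < n := by omega
    have h1 : u ≫ g ⟨k, hkn⟩ = 0 := hF _ _
    obtain ⟨v, hv⟩ := Triangle.coyoneda_exact₂ _ (htri ⟨k, hkn⟩) u h1
    rw [hv, ih (by omega) v]; exact zero_comp

lemma chainNonvanish {n : ℕ} (obj : Fin (n+1) → D) (F : Fin n → D)
    (f : ∀ i : Fin n, obj i.castSucc ⟶ obj i.succ) (g : ∀ i : Fin n, obj i.succ ⟶ F i)
    (h : ∀ i : Fin n, F i ⟶ (obj i.castSucc)⟦(1:ℤ)⟧)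
    (htri : ∀ i : Fin n, Triangle.mk (f i) (g i) (h i) ∈ distTriang D)
    (X : D) (hX : ∀ (i : Fin n) (v : X ⟶ (F i)⟦(-1:ℤ)⟧), v = 0) :
    ∀ (j : Fin (n+1)) (u : X ⟶ obj j), u ≠ 0 → ∃ u' : X ⟶ obj (Fin.last n), u' ≠ 0 := by
  suffices H : ∀ (m : ℕ) (j : Fin (n+1)), j.val + m = n → ∀ (u : X ⟶ obj j), u ≠ 0 →
      ∃ u' : X ⟶ obj (Fin.last n), u' ≠ 0 by
    intro j u hu
    exact H (n - j.val) j (by omega) u hu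
  intro m
  induction m with
  | zero =>
    intro j hj u hu
    have hj' : j = Fin.last n := Fin.ext (by simp only [Fin.val_last]; omega)
    subst hj'
    exact ⟨u, hu⟩
  | succ m ih =>
    intro j hj u hu
    have hjn : j.val < n := by omega
    have hne : (u ≫ f ⟨j.val, hjn⟩) ≠ 0 := by
      intro hz
      apply hu
      obtain ⟨v, hv⟩ := Triangle.coyoneda_exact₂ _
        (inv_rot_of_distTriang _ (htri ⟨j.val, hjn⟩)) u hz
      rw [hv, hX _ v]; exact zero_comp
    exact ih (Fin.succ ⟨j.val, hjn⟩) (by simp only [Fin.val_succ]; omega)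
      (u ≫ f ⟨j.val, hjn⟩) hne

lemma shiftHomEquivNonzero {X Y : D} (r : X⟦(1:ℤ)⟧ ⟶ Y) (hr : r ≠ 0) :
    ((shiftEquiv D (1:ℤ)).toAdjunction.homEquiv X Y) r ≠ 0 := by
  intro h0
  apply hr
  have := congrArg ((shiftEquiv D (1:ℤ)).toAdjunction.homEquiv X Y).symm h0
  replace this : r = _ := (((shiftEquiv D (1:ℤ)).toAdjunction.homEquiv X Y).symm_apply_apply r).symm.trans this
  rw [this, Adjunction.homEquiv_counit]
  simp; rfl

lemma shiftNegMem (σ : StabilityCondition D) {φ : ℝ} {X : D} (hX : X ∈ σ.P φ) :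
    X⟦(-1:ℤ)⟧ ∈ σ.P (φ - 1) := by
  rw [σ.shift_iff]
  have hφ : φ - 1 + 1 = φ := by ring
  rw [hφ]
  exact σ.iso_closed hX ⟨((shiftEquiv D (1:ℤ)).counitIso.app X).symm⟩

lemma hnTop (σ : StabilityCondition D) (σp σm : D → ℝ) (hσ : IsHNPhases D σ σp σm)
    {φ₁ : ℝ} {A : D} (hA : A ∈ σ.P φ₁) (hnz : ¬ IsZero A) : σp A ≤ φ₁ := by
  by_contra hlt
  push_neg at hlt
  obtain ⟨l, obj, ψ, hanti, h0, ⟨isoA⟩, hp, hm, hfac⟩ := hσ A hnz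
  choose F memF nzF f g h htri using hfac
  rw [hp] at hlt
  have hzero1 : IsZero ((Triangle.mk (f 0) (g 0) (h 0)).obj₁) := by
    show IsZero (obj ((0 : Fin (l+1)).castSucc))
    rw [Fin.castSucc_zero]; exact h0
  haveI hiso : IsIso (g 0) := (Triangle.isZero₁_iff_isIso₂ _ (htri 0)).1 hzero1
  have eX : obj ((0 : Fin (l+1)).succ) ≅ F 0 := asIso (g 0)
  have hXmem : obj ((0 : Fin (l+1)).succ) ∈ σ.P (ψ 0) := σ.iso_closed (memF 0) ⟨eX.symm⟩
  have hXnz : ¬ IsZero (obj ((0 : Fin (l+1)).succ)) := fun hz => nzF 0 (hz.of_iso eX.symm)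
  have hXorth : ∀ (i : Fin (l+1)) (v : obj ((0 : Fin (l+1)).succ) ⟶ (F i)⟦(-1:ℤ)⟧),
      v = 0 := by
    intro i v
    refine σ.hom_orthogonal ?_ hXmem (shiftNegMem D σ (memF i)) v
    have : ψ i ≤ ψ 0 := hanti.antitone (Fin.zero_le i)
    linarith
  obtain ⟨u', hu'⟩ := chainNonvanish D obj F f g h htri _ hXorth
    ((0 : Fin (l+1)).succ) (𝟙 _)
    (fun hid => hXnz ((IsZero.iff_id_eq_zero _).2 hid))
  have hw : u' ≫ isoA.hom ≠ 0 := by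
    intro hz
    apply hu'
    have : u' = (u' ≫ isoA.hom) ≫ isoA.inv := by rw [Category.assoc, Iso.hom_inv_id, Category.comp_id]
    rw [this, hz, zero_comp]
  exact hw (σ.hom_orthogonal hlt hXmem hA (u' ≫ isoA.hom))

lemma hnBot (σ : StabilityCondition D) (σp σm : D → ℝ) (hσ : IsHNPhases D σ σp σm)
    {φ₁ : ℝ} {A : D} (hA : A ∈ σ.P φ₁) (hnz : ¬ IsZero A) : φ₁ ≤ σm A := by
  by_contra hlt
  push_neg at hlt
  obtain ⟨l, obj, ψ, hanti, h0, ⟨isoA⟩, hp, hm, hfac⟩ := hσ A hnz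
  choose F memF nzF f g h htri using hfac
  rw [hm] at hlt
  set i : Fin (l+1) := Fin.last l with hi
  have eobj : obj i.succ ≅ A := by rw [hi, Fin.succ_last]; exact isoA
  have hmemObj : obj i.succ ∈ σ.P φ₁ := σ.iso_closed hA ⟨eobj.symm⟩
  have hg : g i = 0 := σ.hom_orthogonal hlt hmemObj (memF i) (g i)
  obtain ⟨r, hr⟩ := Triangle.yoneda_exact₂ _ (rot_of_distTriang _ (htri i)) (𝟙 (F i))
    (by show g i ≫ 𝟙 (F i) = 0; rw [hg, zero_comp])
  have hrnz : r ≠ 0 := by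
    intro h0'
    apply nzF i
    rw [IsZero.iff_id_eq_zero, hr, h0', comp_zero]; rfl
  have hr'nz := shiftHomEquivNonzero D r hrnz
  apply hr'nz
  refine chainVanishLeft D obj F f g h htri h0 ((F i)⟦(-1:ℤ)⟧) ?_ i.castSucc _
  intro j v
  refine σ.hom_orthogonal ?_ (memF j) (shiftNegMem D σ (memF i)) v
  have : ψ i ≤ ψ j := hanti.antitone (Fin.le_last j)
  linarith

lemma ereal_two_mul (d : EReal) : 2 * d = d + d := by
  induction d using EReal.rec with
  | bot => rw [EReal.mul_bot_of_pos (by norm_num)]; simp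
  | coe x => rw [show ((2:EReal)) = ((2:ℝ):EReal) by norm_cast, ← EReal.coe_mul,
      ← EReal.coe_add, EReal.coe_eq_coe_iff]; ring
  | top => rw [EReal.mul_top_of_pos (by norm_num)]; simp

lemma gldim_key (σ τ : StabilityCondition D) (σp σm τp τm : D → ℝ)
    (hσ : IsHNPhases D σ σp σm) (hτ : IsHNPhases D τ τp τm) (d : EReal)
    (hdE : ∀ E : D, ¬ IsZero E → ((max |σp E - τp E| |σm E - τm E| : ℝ) : EReal) ≤ d) :
    gldim D σ ≤ gldim D τ + 2 * d := by
  apply sSup_le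
  rintro x ⟨φ₁, φ₂, A, B, hAmem, hBmem, hAnz, hBnz, ⟨u, hu⟩, rfl⟩
  have h1 : σp A ≤ φ₁ := hnTop D σ σp σm hσ hAmem hAnz
  have h2 : φ₂ ≤ σm B := hnBot D σ σp σm hσ hBmem hBnz
  obtain ⟨lA, objA, ψA, hantiA, h0A, ⟨isoA⟩, hpA, hmA, hfacA⟩ := hτ A hAnz
  obtain ⟨lB, objB, ψB, hantiB, h0B, ⟨isoB⟩, hpB, hmB, hfacB⟩ := hτ B hBnz
  choose FA memA nzA fA gA hA' htriA using hfacA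
  choose FB memB nzB fB gB hB' htriB using hfacB
  have claim : ∃ (i : Fin (lA+1)) (j : Fin (lB+1)) (w : FA i ⟶ FB j), w ≠ 0 := by
    by_contra hc
    push_neg at hc
    have step1 : ∀ (i : Fin (lA+1)) (w : FA i ⟶ B), w = 0 := by
      intro i w
      have hall := chainVanishRight D objB FB fB gB hB' htriB h0B (FA i)
        (fun j v => hc i j v)
      have hw0 : w ≫ isoB.inv = 0 := hall _ _
      have : w = (w ≫ isoB.inv) ≫ isoB.hom := by simp
      rw [this, hw0, zero_comp]
    have step2 := chainVanishLeft D objA FA fA gA hA' htriA h0A B step1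
    apply hu
    have hu0 : isoA.hom ≫ u = 0 := step2 _ _
    have : u = isoA.inv ≫ (isoA.hom ≫ u) := by simp
    rw [this, hu0, comp_zero]
  obtain ⟨i, j, w, hw⟩ := claim
  have hψA : ψA i ≤ τp A := by rw [hpA]; exact hantiA.antitone (Fin.zero_le i)
  have hψB : τm B ≤ ψB j := by rw [hmB]; exact hantiB.antitone (Fin.le_last j)
  have hG : ((ψB j - ψA i : ℝ) : EReal) ≤ gldim D τ :=
    le_sSup ⟨ψA i, ψB j, FA i, FB j, memA i, memB j, nzA i, nzB j, ⟨w, hw⟩, rfl⟩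
  have hda : ((|σp A - τp A| : ℝ) : EReal) ≤ d :=
    le_trans (by exact_mod_cast le_max_left |σp A - τp A| |σm A - τm A|) (hdE A hAnz)
  have hdb : ((|σm B - τm B| : ℝ) : EReal) ≤ d :=
    le_trans (by exact_mod_cast le_max_right |σp B - τp B| |σm B - τm B|) (hdE B hBnz)
  have hreal : (φ₂ - φ₁ : ℝ) ≤ (ψB j - ψA i) + |σp A - τp A| + |σm B - τm B| := by
    have e1 : τp A - σp A ≤ |σp A - τp A| := by rw [abs_sub_comm]; exact le_abs_self _
    have e2 : σm B - τm B ≤ |σm B - τm B| := le_abs_self _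
    linarith
  calc ((φ₂ - φ₁ : ℝ) : EReal)
      ≤ (((ψB j - ψA i) + |σp A - τp A| + |σm B - τm B| : ℝ) : EReal) := by
        exact_mod_cast hreal
    _ = ((ψB j - ψA i : ℝ) : EReal) + ((|σp A - τp A| : ℝ) : EReal)
        + ((|σm B - τm B| : ℝ) : EReal) := by
        rw [EReal.coe_add, EReal.coe_add]
    _ ≤ gldim D τ + d + d := add_le_add (add_le_add hG hda) hdb
    _ = gldim D τ + 2 * d := by rw [ereal_two_mul, add_assoc]

/-- if `d(P,Q)` is the slicing distance between two stability conditions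
`σ` and `τ`, namely the sup over nonzero `E` of
`max (|φ⁺_σ(E) − φ⁺_τ(E)|) (|φ⁻_σ(E) − φ⁻_τ(E)|)`, then
`|gldim σ − gldim τ| ≤ 2·d(P,Q)` in the extended reals, stated as the two one-sided
inequalities `gldim σ ≤ gldim τ + 2·d` and `gldim τ ≤ gldim σ + 2·d`. -/
theorem gldim_lipschitz_slicing_distance (σ τ : StabilityCondition D)
    (σp σm τp τm : D → ℝ)
    (hσ : IsHNPhases D σ σp σm) (hτ : IsHNPhases D τ τp τm)
    (d : EReal)
    (hd : d = sSup { x : EReal | ∃ E : D, ¬ IsZero E ∧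
      x = ((max |σp E - τp E| |σm E - τm E| : ℝ) : EReal) }) :
    gldim D σ ≤ gldim D τ + 2 * d ∧ gldim D τ ≤ gldim D σ + 2 * d := by
  constructor
  · apply gldim_key D σ τ σp σm τp τm hσ hτ d
    intro E hE
    rw [hd]
    exact le_sSup ⟨E, hE, rfl⟩
  · apply gldim_key D τ σ τp τm σp σm hτ hσ d
    intro E hE
    rw [hd]
    have heq : ((max |τp E - σp E| |τm E - σm E| : ℝ) : EReal)
        = ((max |σp E - τp E| |σm E - τm E| : ℝ) : EReal) := by
      rw [abs_sub_comm (τp E), abs_sub_comm (τm E)]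
    rw [heq]
    exact le_sSup ⟨E, hE, rfl⟩
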